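/- Let n ≥ 2, let A = K[x]/(x^{n+1}) with maximal ideal m = (x), and let U ⊆ m be a K-linear subspace with dim_K U = n−1 and x^n ∉ U. Then there exists a K-algebra automorphism φ of A such that φ(U) = span_K{x, x², …, x^{n−1}}. -/

import Mathlib

open Polynomial Module

set_option synthInstance.maxHeartbeats 1000000
set_option maxHeartbeats 2000000

/-- The truncated polynomial algebra `K[x]/(x^{n+1})`. -/
abbrev TruncPoly (K : Type*) [Field K] (n : ℕ) : Type _ :=
  Polynomial K ⧸ Ideal.span {(Polynomial.X : Polynomial K) ^ (n + 1)}

/-- The image of `x` in `K[x]/(x^{n+1})`. -/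
noncomputable abbrev truncX (K : Type*) [Field K] (n : ℕ) : TruncPoly K n :=
  Ideal.Quotient.mk (Ideal.span {(Polynomial.X : Polynomial K) ^ (n + 1)}) Polynomial.X

section Aux

variable (K : Type*) [Field K] (n : ℕ)

noncomputable def truncPB : PowerBasis K (TruncPoly K n) :=
  AdjoinRoot.powerBasis (pow_ne_zero _ X_ne_zero)

lemma truncPB_gen : (truncPB K n).gen = truncX K n := rfl

lemma truncPB_dim : (truncPB K n).dim = n + 1 := by
  simp [truncPB]

instance : Module.Finite K (TruncPoly K n) :=
  Module.Finite.of_basis (truncPB K n).basis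

variable {n}

lemma truncX_pow_eq_zero {s : ℕ} (hs : n + 1 ≤ s) : truncX K n ^ s = 0 := by
  obtain ⟨e, rfl⟩ := Nat.exists_eq_add_of_le hs
  have h0 : truncX K n ^ (n + 1) = 0 := by
    rw [← map_pow, Ideal.Quotient.eq_zero_iff_mem]
    exact Ideal.subset_span rfl
  rw [pow_add, h0, zero_mul]

lemma truncX_pow_ne_zero {j : ℕ} (hj : j ≤ n) : truncX K n ^ j ≠ 0 := by
  have h := (truncPB K n).basis.ne_zero ⟨j, by rw [truncPB_dim]; omega⟩
  rw [PowerBasis.basis_eq_pow, truncPB_gen] at h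
  exact h

lemma truncX_li (m : ℕ) (hm : m ≤ n) :
    LinearIndependent K (fun i : Fin m => truncX K n ^ ((i : ℕ) + 1)) := by
  have h := (truncPB K n).basis.linearIndependent
  have hg : Function.Injective (fun i : Fin m =>
      (⟨(i : ℕ) + 1, by rw [truncPB_dim]; omega⟩ : Fin (truncPB K n).dim)) := by
    intro a b hab
    simpa [Fin.ext_iff] using hab
  have h2 := h.comp _ hg
  have hfun : (fun i : Fin m => truncX K n ^ ((i : ℕ) + 1)) = (⇑(truncPB K n).basis ∘ fun i : Fin m =>
      (⟨(i : ℕ) + 1, by rw [truncPB_dim]; omega⟩ : Fin (truncPB K n).dim)) := by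
    funext i
    simp [PowerBasis.coe_basis, truncPB_gen]
  rw [hfun]
  exact h2

lemma truncX_mul_mem_of_high (S : Submodule K (TruncPoly K n)) (s : ℕ)
    (hS : ∀ i, s ≤ i → truncX K n ^ i ∈ S) (b : TruncPoly K n) :
    truncX K n ^ s * b ∈ S := by
  have hb := (truncPB K n).basis.sum_repr b
  rw [← hb, Finset.mul_sum]
  refine Submodule.sum_mem _ fun i _ => ?_
  rw [mul_smul_comm]
  refine Submodule.smul_mem _ _ ?_
  have : truncX K n ^ s * (truncPB K n).basis i = truncX K n ^ (s + (i : ℕ)) := by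
    rw [PowerBasis.coe_basis, truncPB_gen, ← pow_add]
  rw [this]
  exact hS _ (by omega)

lemma ideal_span_eq :
    (Ideal.span {truncX K n}).restrictScalars K
      = Submodule.span K (Set.range fun i : Fin n => truncX K n ^ ((i : ℕ) + 1)) := by
  apply le_antisymm
  · intro w hw
    rw [Submodule.restrictScalars_mem, Ideal.mem_span_singleton] at hw
    obtain ⟨b, rfl⟩ := hw
    rw [show truncX K n = truncX K n ^ 1 by rw [pow_one]]
    refine truncX_mul_mem_of_high K _ 1 (fun i hi => ?_) b
    rcases le_or_gt i n with h | h
    · exact Submodule.subset_span ⟨⟨i - 1, by omega⟩, by simp; congr 1; omega⟩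
    · have h0 : truncX K n ^ i = 0 := truncX_pow_eq_zero K (by omega)
      rw [h0]; exact Submodule.zero_mem _
  · rw [Submodule.span_le]
    rintro z ⟨i, rfl⟩
    simp only [SetLike.mem_coe, Submodule.restrictScalars_mem, Ideal.mem_span_singleton]
    exact dvd_pow_self _ (Nat.succ_ne_zero _)

lemma finrank_truncIdeal : finrank K ((Ideal.span {truncX K n}).restrictScalars K) = n := by
  rw [ideal_span_eq, finrank_span_eq_card (truncX_li K n le_rfl), Fintype.card_fin]

lemma one_add_pow_eq {R : Type*} [CommRing R] (z : R) (r : ℕ) :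
    ∃ w, (1 + z) ^ r = 1 + (r : R) * z + z ^ 2 * w := by
  induction r with
  | zero => exact ⟨0, by push_cast; ring⟩
  | succ r ih =>
    obtain ⟨w, hw⟩ := ih
    exact ⟨(r : R) + w + z * w, by rw [pow_succ, hw]; push_cast; ring⟩

end Aux

section Step

variable {K : Type*} [Field K] [CharZero K] {n : ℕ}

lemma exists_step (hn : 2 ≤ n) (r : ℕ) (hr1 : 1 ≤ r) (hrn : r ≤ n - 1) (c : K) :
    ∃ ψ : TruncPoly K n ≃ₐ[K] TruncPoly K n,
      (∀ i, r < i → ψ (truncX K n ^ i) = truncX K n ^ i) ∧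
      ψ (truncX K n ^ r + c • truncX K n ^ n) = truncX K n ^ r ∧
      (∀ b, truncX K n ∣ b → truncX K n ∣ ψ b) := by
  set t : TruncPoly K n := truncX K n with htdef
  have hsmul : ∀ (k : K) (v : TruncPoly K n), k • v = algebraMap K (TruncPoly K n) k * v :=
    fun k v => Algebra.smul_def k v
  set a : K := -(c / (r : K)) with hadef
  set z : TruncPoly K n := algebraMap K (TruncPoly K n) a * t ^ (n - r) with hzdef
  set y : TruncPoly K n := t * (1 + z) with hydef
  have hzmul : ∀ s : ℕ, n + 1 ≤ s + (n - r) → t ^ s * z = 0 := by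
    intro s hs
    rw [hzdef, mul_left_comm, ← pow_add, truncX_pow_eq_zero K hs, mul_zero]
  have hpow_high : ∀ i, r < i → y ^ i = t ^ i := by
    intro i hi
    obtain ⟨w, hw⟩ := one_add_pow_eq z i
    have h1 : y ^ i = t ^ i + (t ^ i * z) * ((i : TruncPoly K n) + z * w) := by
      rw [hydef, mul_pow, hw]; ring
    rw [h1, hzmul i (by omega), zero_mul, add_zero]
  have hpow_r : y ^ r = t ^ r - c • t ^ n := by
    obtain ⟨w, hw⟩ := one_add_pow_eq z r
    have h1 : y ^ r = t ^ r + (r : TruncPoly K n) * (t ^ r * z) + (t ^ r * z) * (z * w) := by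
      rw [hydef, mul_pow, hw]; ring
    have hrn' : t ^ r * t ^ (n - r) = t ^ n := by
      rw [← pow_add]; congr 1; omega
    have h2 : t ^ r * z = algebraMap K (TruncPoly K n) a * t ^ n := by
      rw [hzdef]; linear_combination algebraMap K (TruncPoly K n) a * hrn'
    have hz0 : t ^ n * z = 0 := hzmul n (by omega)
    have h3 : (algebraMap K (TruncPoly K n) a * t ^ n) * (z * w) = 0 := by
      linear_combination (algebraMap K (TruncPoly K n) a * w) * hz0
    have hrK : (r : K) ≠ 0 := Nat.cast_ne_zero.mpr (by omega)
    have h4 : (r : TruncPoly K n) * (algebraMap K (TruncPoly K n) a * t ^ n)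
        = -(c • t ^ n) := by
      rw [hsmul c (t ^ n), ← map_natCast (algebraMap K (TruncPoly K n)) r, ← mul_assoc,
        ← map_mul]
      rw [hadef, mul_neg, mul_div_cancel₀ c hrK, map_neg]
      exact neg_mul _ _
    rw [h1, h2, h4, h3, add_zero, sub_eq_add_neg]
  have haev : (aeval y) ((X : Polynomial K) ^ (n + 1)) = 0 := by
    rw [map_pow, aeval_X, hydef, mul_pow, truncX_pow_eq_zero K le_rfl, zero_mul]
  set ψ₀ : TruncPoly K n →ₐ[K] TruncPoly K n :=
    AdjoinRoot.liftAlgHom ((X : Polynomial K) ^ (n + 1)) (Algebra.ofId K _) y haev with hψ₀def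
  have hψt : ψ₀ t = y := AdjoinRoot.liftAlgHom_root _ _ _ haev
  have hψpow : ∀ i : ℕ, ψ₀ (t ^ i) = y ^ i := fun i =>
    (map_pow ψ₀ t i).trans (by rw [hψt])
  have hrange : ∀ d : ℕ, ∀ j : ℕ, n + 1 - d ≤ j →
      t ^ j ∈ Subalgebra.toSubmodule ψ₀.range := by
    intro d
    induction d with
    | zero =>
      intro j hj
      have h0 : t ^ j = 0 := truncX_pow_eq_zero K (by omega)
      rw [h0]; exact Submodule.zero_mem _
    | succ d ih =>
      intro j hj
      rcases le_or_gt (n + 1 - d) j with h | h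
      · exact ih j h
      · obtain ⟨w, hw⟩ := one_add_pow_eq z j
        have hsplit : t ^ j * t ^ (n - r) = t ^ (j + 1) * t ^ (n - r - 1) := by
          rw [← pow_add, ← pow_add]; congr 1; omega
        have h1 : y ^ j = t ^ j + t ^ (j + 1) *
            (algebraMap K (TruncPoly K n) a * t ^ (n - r - 1) * ((j : TruncPoly K n) + z * w)) := by
          rw [hydef, mul_pow, hw, hzdef]
          linear_combination (algebraMap K (TruncPoly K n) a * ((j : TruncPoly K n)
            + algebraMap K (TruncPoly K n) a * t ^ (n - r) * w)) * hsplit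
        have h2 : t ^ j = y ^ j - t ^ (j + 1) *
            (algebraMap K (TruncPoly K n) a * t ^ (n - r - 1) * ((j : TruncPoly K n) + z * w)) := by
          rw [h1]; ring
        rw [h2]
        refine Submodule.sub_mem _ ⟨t ^ j, hψpow j⟩ ?_
        exact truncX_mul_mem_of_high K _ (j + 1) (fun i hi => ih i (by omega)) _
  have hsurj : Function.Surjective ψ₀ := by
    rw [← AlgHom.range_eq_top]
    have ht1 : t ∈ ψ₀.range := by
      have h := hrange n 1 (by omega)
      simpa using h
    have htop : Algebra.adjoin K {t} = ⊤ := AdjoinRoot.adjoinRoot_eq_top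
    refine top_unique ?_
    rw [← htop]
    exact Algebra.adjoin_le (Set.singleton_subset_iff.mpr ht1)
  have hinj : Function.Injective ψ₀ := by
    have h : Function.Surjective ψ₀.toLinearMap := hsurj
    exact LinearMap.injective_iff_surjective.mpr h
  refine ⟨AlgEquiv.ofBijective ψ₀ ⟨hinj, hsurj⟩, ?_, ?_, ?_⟩
  · intro i hi
    show ψ₀ (t ^ i) = t ^ i
    rw [hψpow, hpow_high i hi]
  · show ψ₀ (t ^ r + c • t ^ n) = t ^ r
    rw [map_add, map_smul, hψpow, hψpow, hpow_r, hpow_high n (by omega)]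
    module
  · intro b hb
    obtain ⟨e, rfl⟩ := hb
    show t ∣ ψ₀ (t * e)
    rw [map_mul, hψt, hydef]
    exact ⟨(1 + z) * ψ₀ e, by ring⟩

end Step

set_option synthInstance.maxHeartbeats 1000000 in
set_option maxHeartbeats 2000000 in
/-- Let `n ≥ 2`, `A = K[x]/(x^{n+1})` with maximal ideal `m = (x)`, and
let `U ⊆ m` be a `K`-linear subspace with `dim_K U = n−1` and `x^n ∉ U`.  Then there exists
a `K`-algebra automorphism `φ` of `A` such that `φ(U) = span{x, x², …, x^{n−1}}`. -/
theorem stmt_14 (K : Type*) [Field K] [IsAlgClosed K] [CharZero K]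
    (n : ℕ) (hn : 2 ≤ n)
    (U : Submodule K (TruncPoly K n))
    (hUm : U ≤ (Ideal.span {truncX K n}).restrictScalars K)
    (hUdim : Module.finrank K U = n - 1)
    (hxn : truncX K n ^ n ∉ U) :
    ∃ φ : TruncPoly K n ≃ₐ[K] TruncPoly K n,
      U.map φ.toLinearMap = Submodule.span K
        ((fun j : ℕ => truncX K n ^ j) '' {j : ℕ | 1 ≤ j ∧ j ≤ n - 1}) := by
  classical
  have key : ∀ d : ℕ, d ≤ n - 1 → ∃ φ : TruncPoly K n ≃ₐ[K] TruncPoly K n,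
      (U.map φ.toLinearMap ≤ (Ideal.span {truncX K n}).restrictScalars K) ∧
      Module.finrank K (U.map φ.toLinearMap) = n - 1 ∧
      truncX K n ^ n ∉ U.map φ.toLinearMap ∧
      (∀ i, n - 1 - d < i → i ≤ n - 1 → truncX K n ^ i ∈ U.map φ.toLinearMap) := by
    intro d
    induction d with
    | zero =>
      intro _
      have hrefl : (AlgEquiv.refl (R := K) (A₁ := TruncPoly K n)).toLinearMap
          = LinearMap.id := rfl
      refine ⟨AlgEquiv.refl, ?_, ?_, ?_, ?_⟩ <;> rw [hrefl, Submodule.map_id]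
      · exact hUm
      · exact hUdim
      · exact hxn
      · intro i h1 h2; omega
    | succ d ih =>
      intro hd
      obtain ⟨φ, hm, hdim, hxn', hinv⟩ := ih (by omega)
      clear ih
      obtain ⟨W, hWdef⟩ : ∃ W : Submodule K (TruncPoly K n), W = U.map φ.toLinearMap :=
        ⟨_, rfl⟩
      rw [← hWdef] at hm hdim hxn' hinv
      obtain ⟨r, hrdef⟩ : ∃ r : ℕ, r = n - 1 - d := ⟨_, rfl⟩
      rw [← hrdef] at hinv
      have hr1 : 1 ≤ r := by omega
      have hrn : r ≤ n - 1 := by omega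
      -- extraction of c with t^r + c • t^n ∈ W
      have hinf : W ⊓ Submodule.span K {truncX K n ^ n} = ⊥ := by
        rw [Submodule.eq_bot_iff]
        rintro x ⟨hxW, hxs⟩
        obtain ⟨d', rfl⟩ := Submodule.mem_span_singleton.mp hxs
        rcases eq_or_ne d' 0 with h0 | h0
        · rw [h0, zero_smul]
        · exfalso
          apply hxn'
          have := Submodule.smul_mem W d'⁻¹ hxW
          rwa [smul_smul, inv_mul_cancel₀ h0, one_smul] at this
      have hsum := Submodule.finrank_sup_add_finrank_inf_eq W
        (Submodule.span K {truncX K n ^ n})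
      rw [hinf, finrank_bot, hdim, finrank_span_singleton
        (truncX_pow_ne_zero K le_rfl)] at hsum
      have hsup_le : W ⊔ Submodule.span K {truncX K n ^ n}
          ≤ (Ideal.span {truncX K n}).restrictScalars K := by
        refine sup_le hm ?_
        rw [Submodule.span_le, Set.singleton_subset_iff]
        rw [SetLike.mem_coe, Submodule.restrictScalars_mem, Ideal.mem_span_singleton]
        exact dvd_pow_self _ (by omega)
      have hWsup : W ⊔ Submodule.span K {truncX K n ^ n}
          = (Ideal.span {truncX K n}).restrictScalars K := by
        refine Submodule.eq_of_le_of_finrank_le hsup_le ?_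
        rw [finrank_truncIdeal]
        omega
      have htr : truncX K n ^ r ∈ W ⊔ Submodule.span K {truncX K n ^ n} := by
        rw [hWsup, Submodule.restrictScalars_mem, Ideal.mem_span_singleton]
        exact dvd_pow_self _ (by omega)
      obtain ⟨w1, hw1, v, hv, hadd⟩ := Submodule.mem_sup.mp htr
      obtain ⟨d', rfl⟩ := Submodule.mem_span_singleton.mp hv
      have hc : truncX K n ^ r + (-d') • truncX K n ^ n ∈ W := by
        have heq : truncX K n ^ r + (-d') • truncX K n ^ n = w1 := by
          rw [← hadd]; module
        rw [heq]; exact hw1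
      obtain ⟨ψ, hψ1, hψ2, hψ3⟩ := exists_step hn r hr1 hrn (-d')
      have hcomp : (φ.trans ψ).toLinearMap = ψ.toLinearMap ∘ₗ φ.toLinearMap :=
        LinearMap.ext fun x => rfl
      have hmap : U.map (φ.trans ψ).toLinearMap = W.map ψ.toLinearMap := by
        rw [hcomp, Submodule.map_comp, ← hWdef]
      have hfr : Module.finrank K (W.map ψ.toLinearMap) = Module.finrank K W :=
        LinearEquiv.finrank_map_eq ψ.toLinearEquiv W
      refine ⟨φ.trans ψ, ?_, ?_, ?_, ?_⟩
      · rw [hmap]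
        rintro x ⟨w', hw', rfl⟩
        rw [Submodule.restrictScalars_mem, Ideal.mem_span_singleton]
        exact hψ3 w' (Ideal.mem_span_singleton.mp (hm hw'))
      · rw [hmap, hfr]; exact hdim
      · rw [hmap]
        rintro ⟨w', hw', hww⟩
        apply hxn'
        have hfix : ψ (truncX K n ^ n) = truncX K n ^ n := hψ1 n (by omega)
        have : w' = truncX K n ^ n := ψ.injective (by rw [hfix]; exact hww)
        rwa [← this]
      · intro i h1 h2
        rw [hmap]
        rcases eq_or_lt_of_le (show r ≤ i by omega) with heq | hlt
        · refine ⟨truncX K n ^ r + (-d') • truncX K n ^ n, hc, ?_⟩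
          show ψ (truncX K n ^ r + (-d') • truncX K n ^ n) = truncX K n ^ i
          rw [hψ2, heq]
        · exact ⟨truncX K n ^ i, hinv i (by omega) h2, hψ1 i hlt⟩
  obtain ⟨φ, hm', hdim', hxn', hall⟩ := key (n - 1) le_rfl
  refine ⟨φ, ?_⟩
  have hVset : ((fun j : ℕ => truncX K n ^ j) '' {j : ℕ | 1 ≤ j ∧ j ≤ n - 1})
      = Set.range fun i : Fin (n - 1) => truncX K n ^ ((i : ℕ) + 1) := by
    ext x
    constructor
    · rintro ⟨j, ⟨hj1, hj2⟩, rfl⟩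
      refine ⟨⟨j - 1, by omega⟩, ?_⟩
      show truncX K n ^ ((j - 1) + 1) = truncX K n ^ j
      congr 1
      omega
    · rintro ⟨i, rfl⟩
      have hi := i.isLt
      exact ⟨(i : ℕ) + 1, ⟨by omega, by omega⟩, rfl⟩
  have hVfr : Module.finrank K (Submodule.span K
      ((fun j : ℕ => truncX K n ^ j) '' {j : ℕ | 1 ≤ j ∧ j ≤ n - 1})) = n - 1 := by
    rw [hVset, finrank_span_eq_card (truncX_li K (n - 1) (by omega)), Fintype.card_fin]
  have hle : Submodule.span K ((fun j : ℕ => truncX K n ^ j) '' {j : ℕ | 1 ≤ j ∧ j ≤ n - 1})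
      ≤ U.map φ.toLinearMap := by
    rw [Submodule.span_le]
    rintro x ⟨j, ⟨hj1, hj2⟩, rfl⟩
    exact hall j (by omega) hj2
  exact (Submodule.eq_of_le_of_finrank_le hle (by rw [hdim', hVfr])).symm
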